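/- For any topological space X, if player ONE has a winning strategy in the mildly Menger game G_fin(C_O, C_O) on X, then player TWO has a winning strategy in the mildly compact-clopen game on X. -/
import Mathlib


/-- `X` is zero-dimensional: it is nonempty and has a base consisting of clopen sets. -/
def ZeroDim (X : Type*) [TopologicalSpace X] : Prop :=
  Nonempty X ∧ ∀ (x : X) (U : Set X), IsOpen U → x ∈ U →
    ∃ C : Set X, IsClopen C ∧ x ∈ C ∧ C ⊆ U

/-- `𝒰` is a cover of `X` consisting of sets satisfying `P`
(e.g. an open cover for `P = IsOpen`, a clopen cover for `P = IsClopen`). -/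
def IsCover {X : Type*} (P : Set X → Prop) (𝒰 : Set (Set X)) : Prop :=
  (∀ U ∈ 𝒰, P U) ∧ ⋃₀ 𝒰 = Set.univ

/-- The selection principle `S_fin(P-covers, P-covers)`: for every sequence of
`P`-covers `u n` there are finite subsets `v n ⊆ u n` whose union is a cover. -/
def SelFin {X : Type*} (P : Set X → Prop) : Prop :=
  ∀ u : ℕ → Set (Set X), (∀ n, IsCover P (u n)) →
    ∃ v : ℕ → Set (Set X), (∀ n, (v n).Finite ∧ v n ⊆ u n) ∧
      (⋃ n, ⋃₀ v n) = Set.univ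

/-- Player ONE has a winning strategy in the selection game `G_fin(P-covers, P-covers)`:
a strategy `σ`, depending on TWO's previous moves, always playing `P`-covers, such that for
every sequence of legal responses by TWO (finite subsets of the cover just played),
the union of TWO's choices fails to cover. -/
def ONEWinsSel {X : Type*} (P : Set X → Prop) : Prop :=
  ∃ σ : List (Set (Set X)) → Set (Set X),
    (∀ h, IsCover P (σ h)) ∧
    ∀ v : ℕ → Set (Set X),
      (∀ n, (v n).Finite ∧ v n ⊆ σ (List.ofFn fun i : Fin n => v i)) →
      (⋃ n, ⋃₀ v n) ≠ Set.univ

/-- Player TWO has a winning strategy in the selection game `G_fin(P-covers, P-covers)`: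
a strategy `τ`, depending on ONE's moves so far, such that against every sequence of
`P`-covers played by ONE, TWO's responses are legal (finite subsets of the corresponding
cover) and their union is a cover. -/
def TWOWinsSel {X : Type*} (P : Set X → Prop) : Prop :=
  ∃ τ : List (Set (Set X)) → Set (Set X),
    ∀ u : ℕ → Set (Set X), (∀ n, IsCover P (u n)) →
      (∀ n, (τ (List.ofFn fun i : Fin (n + 1) => u i)).Finite ∧
        τ (List.ofFn fun i : Fin (n + 1) => u i) ⊆ u n) ∧
      (⋃ n, ⋃₀ τ (List.ofFn fun i : Fin (n + 1) => u i)) = Set.univ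

/-- Player ONE has a winning strategy in the `Q`-`R` game (in round `n`, ONE picks a set
`K n` with `Q (K n)` and TWO responds with a set `U n` with `R (U n)` and `K n ⊆ U n`;
ONE wins if `⋃ n, U n = univ`).  E.g. `Q = IsCompact`, `R = IsClopen` is the
compact-clopen game; `R = IsOpen` gives the compact-open game. -/
def ONEWinsCC {X : Type*} (Q R : Set X → Prop) : Prop :=
  ∃ σ : List (Set X) → Set X,
    (∀ h, Q (σ h)) ∧
    ∀ v : ℕ → Set X,
      (∀ n, R (v n) ∧ σ (List.ofFn fun i : Fin n => v i) ⊆ v n) →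
      (⋃ n, v n) = Set.univ

/-- Player TWO has a winning strategy in the `Q`-`R` game: a strategy `τ`, depending on
ONE's moves so far, such that against every sequence of sets satisfying `Q` played by ONE,
TWO's responses satisfy `R`, contain ONE's corresponding sets, and fail to cover `X`. -/
def TWOWinsCC {X : Type*} (Q R : Set X → Prop) : Prop :=
  ∃ τ : List (Set X) → Set X,
    ∀ u : ℕ → Set X, (∀ n, Q (u n)) →
      (∀ n, R (τ (List.ofFn fun i : Fin (n + 1) => u i)) ∧
        u n ⊆ τ (List.ofFn fun i : Fin (n + 1) => u i)) ∧
      (⋃ n, τ (List.ofFn fun i : Fin (n + 1) => u i)) ≠ Set.univ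

/-- A subset `K` of `X` is mildly compact if every cover of `K` by clopen subsets
of `X` contains a finite subcover. -/
def MildlyCompact {X : Type*} [TopologicalSpace X] (K : Set X) : Prop :=
  ∀ 𝒰 : Set (Set X), (∀ U ∈ 𝒰, IsClopen U) → K ⊆ ⋃₀ 𝒰 →
    ∃ 𝒱 ⊆ 𝒰, 𝒱.Finite ∧ K ⊆ ⋃₀ 𝒱

/-- The quasi-component of a subset `K` of `X`: the intersection of all clopen
subsets of `X` containing `K`. -/
def QuasiComp {X : Type*} [TopologicalSpace X] (K : Set X) : Set X :=
  ⋂₀ {C : Set X | IsClopen C ∧ K ⊆ C}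

open Classical in
noncomputable def pickFin {X : Type*} (σ : List (Set (Set X)) → Set (Set X))
    (acc : List (Set (Set X))) (K : Set X) : Set (Set X) :=
  if h : ∃ 𝒱 ⊆ σ acc, 𝒱.Finite ∧ K ⊆ ⋃₀ 𝒱 then h.choose else ∅

lemma pickFin_spec {X : Type*} [TopologicalSpace X] (σ : List (Set (Set X)) → Set (Set X))
    (hσ : ∀ h, IsCover IsClopen (σ h)) (acc : List (Set (Set X))) {K : Set X}
    (hK : MildlyCompact K) :
    pickFin σ acc K ⊆ σ acc ∧ (pickFin σ acc K).Finite ∧ K ⊆ ⋃₀ pickFin σ acc K := by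
  have hex : ∃ 𝒱 ⊆ σ acc, 𝒱.Finite ∧ K ⊆ ⋃₀ 𝒱 :=
    hK (σ acc) (hσ acc).1 (by rw [(hσ acc).2]; exact Set.subset_univ K)
  rw [pickFin, dif_pos hex]
  exact ⟨hex.choose_spec.1, hex.choose_spec.2⟩

noncomputable def goFin {X : Type*} (σ : List (Set (Set X)) → Set (Set X)) :
    List (Set (Set X)) → List (Set X) → List (Set (Set X))
  | acc, [] => acc
  | acc, K :: rest => goFin σ (acc ++ [pickFin σ acc K]) rest

lemma goFin_concat {X : Type*} (σ : List (Set (Set X)) → Set (Set X))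
    (acc : List (Set (Set X))) (l : List (Set X)) (K : Set X) :
    goFin σ acc (l ++ [K]) = goFin σ acc l ++ [pickFin σ (goFin σ acc l) K] := by
  induction l generalizing acc with
  | nil => simp [goFin]
  | cons a t ih => simp [goFin, ih]

/-- If ONE has a winning strategy in the mildly Menger game `G_fin(C_O, C_O)` on `X`,
then TWO has a winning strategy in the mildly compact-clopen game on `X`. -/
theorem stmt7 {X : Type*} [TopologicalSpace X]
    (h : ONEWinsSel (X := X) IsClopen) :
    TWOWinsCC (X := X) MildlyCompact IsClopen := by
  obtain ⟨σ, hσcov, hσwin⟩ := h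
  refine ⟨fun l => ⋃₀ ((goFin σ [] l).getLastD ∅), ?_⟩
  intro u hu
  set VL : ℕ → List (Set (Set X)) :=
    fun n => goFin σ [] (List.ofFn fun i : Fin n => u i) with hVL
  set V : ℕ → Set (Set X) := fun n => pickFin σ (VL n) (u n) with hV
  have hofn : ∀ n, (List.ofFn fun i : Fin (n + 1) => u i)
      = (List.ofFn fun i : Fin n => u i) ++ [u n] := by
    intro n
    rw [List.ofFn_succ']
    simp [List.concat_eq_append]
  have hVLsucc : ∀ n, VL (n + 1) = VL n ++ [V n] := by
    intro n
    rw [hVL]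
    simp only
    rw [hofn n, goFin_concat]
  have hlast : ∀ n, ((goFin σ [] (List.ofFn fun i : Fin (n + 1) => u i)).getLastD ∅) = V n := by
    intro n
    have : goFin σ [] (List.ofFn fun i : Fin (n + 1) => u i) = VL n ++ [V n] := hVLsucc n
    rw [this, List.getLastD_concat]
  have hspec : ∀ n, V n ⊆ σ (VL n) ∧ (V n).Finite ∧ u n ⊆ ⋃₀ V n :=
    fun n => pickFin_spec σ hσcov (VL n) (hu n)
  constructor
  · intro n
    dsimp only
    rw [hlast n]
    refine ⟨?_, (hspec n).2.2⟩
    -- ⋃₀ V n is clopen: finite union of clopen sets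
    have hfin := (hspec n).2.1
    have hcl : ∀ U ∈ V n, IsClopen U := fun U hU => (hσcov (VL n)).1 U ((hspec n).1 hU)
    rw [Set.sUnion_eq_biUnion]
    exact hfin.isClopen_biUnion hcl
  · -- TWO's play fails to cover, since σ is winning for ONE
    have hlegal : ∀ n, (V n).Finite ∧ V n ⊆ σ (List.ofFn fun i : Fin n => V i) := by
      intro n
      have hVLeq : ∀ m, (List.ofFn fun i : Fin m => V i) = VL m := by
        intro m
        induction m with
        | zero => simp [hVL, goFin]
        | succ k ih =>
          rw [List.ofFn_succ']
          simp only [List.concat_eq_append, Fin.coe_castSucc, Fin.val_last]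
          rw [ih, hVLsucc]
      rw [hVLeq n]
      exact ⟨(hspec n).2.1, (hspec n).1⟩
    have hne := hσwin V hlegal
    intro hcontr
    apply hne
    rw [← hcontr]
    dsimp only
    exact (Set.iUnion_congr fun n => by rw [hlast n]).symm
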